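/- If T is a bounded totally paranormal operator (T − λI is paranormal for every complex λ) and its spectrum is the singleton {μ}, then T = μI. -/

import Mathlib

open Filter ENNReal

lemma normaloid_pow {H : Type*} [NormedAddCommGroup H] [InnerProductSpace ℂ H]
    [CompleteSpace H] (S : H →L[ℂ] H)
    (hP : ∀ x : H, ‖S x‖ ^ 2 ≤ ‖S (S x)‖ * ‖x‖) (n : ℕ) (hn : n ≠ 0) :
    ‖S‖ ^ n ≤ ‖S ^ n‖ := by
  -- pointwise: ‖S x‖^n * ‖x‖ ≤ ‖(S^n) x‖ * ‖x‖^n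
  have hpoint : ∀ x : H, ‖S x‖ ^ n * ‖x‖ ≤ ‖(S ^ n) x‖ * ‖x‖ ^ n := by
    intro x
    set a : ℕ → ℝ := fun k => ‖(S ^ k) x‖ with ha
    have hsucc : ∀ k, (S ^ (k + 1)) x = S ((S ^ k) x) := by
      intro k; rw [pow_succ']; rfl
    have hlog : ∀ k, a (k + 1) ^ 2 ≤ a (k + 2) * a k := by
      intro k
      have := hP ((S ^ k) x)
      show ‖(S ^ (k + 1)) x‖ ^ 2 ≤ ‖(S ^ (k + 1 + 1)) x‖ * ‖(S ^ k) x‖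
      simp only [hsucc]; exact this
    have hanon : ∀ k, 0 ≤ a k := fun k => norm_nonneg _
    have hratio : ∀ k, a 1 * a k ≤ a 0 * a (k + 1) := by
      intro k
      induction k with
      | zero => rw [mul_comm]
      | succ m ih =>
        by_cases hz : a m = 0
        · have h1 : a (m + 1) = 0 := by
            have : a (m + 1) ≤ ‖S‖ * a m := by
              rw [ha]; simp only [hsucc]; exact S.le_opNorm _
            nlinarith [hanon (m + 1), norm_nonneg S]
          rw [h1, mul_zero]
          exact mul_nonneg (hanon 0) (hanon (m + 2))
        · have hp : 0 < a m := lt_of_le_of_ne (hanon m) (Ne.symm hz)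
          rw [← mul_le_mul_iff_left₀ hp]
          nlinarith [hlog m, mul_le_mul_of_nonneg_left ih (hanon (m + 1)),
            mul_le_mul_of_nonneg_left (hlog m) (hanon 0)]
    have hmain : ∀ k, a 1 ^ k * a 0 ≤ a k * a 0 ^ k := by
      intro k
      induction k with
      | zero => simp
      | succ m ih =>
        calc a 1 ^ (m + 1) * a 0 = a 1 * (a 1 ^ m * a 0) := by ring
          _ ≤ a 1 * (a m * a 0 ^ m) :=
              mul_le_mul_of_nonneg_left ih (hanon 1)
          _ = (a 1 * a m) * a 0 ^ m := by ring
          _ ≤ (a 0 * a (m + 1)) * a 0 ^ m :=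
              mul_le_mul_of_nonneg_right (hratio m) (pow_nonneg (hanon 0) m)
          _ = a (m + 1) * a 0 ^ (m + 1) := by ring
    have := hmain n
    simpa [ha, pow_one] using this
  -- now extract the operator norm bound
  set c : ℝ := ‖S ^ n‖ ^ ((n : ℝ)⁻¹) with hc
  have hcpow : c ^ n = ‖S ^ n‖ := Real.rpow_inv_natCast_pow (norm_nonneg _) hn
  have hcnon : 0 ≤ c := Real.rpow_nonneg (norm_nonneg _) _
  have hSc : ‖S‖ ≤ c := by
    refine S.opNorm_le_bound hcnon fun x => ?_
    by_cases hx : ‖x‖ = 0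
    · have : x = 0 := norm_eq_zero.mp hx
      simp [this]
    · have hxpos : 0 < ‖x‖ := lt_of_le_of_ne (norm_nonneg x) (Ne.symm hx)
      have h1 : ‖S x‖ ^ n ≤ (c * ‖x‖) ^ n := by
        have h2 : ‖(S ^ n) x‖ ≤ ‖S ^ n‖ * ‖x‖ := (S ^ n).le_opNorm x
        have h3 : ‖S x‖ ^ n * ‖x‖ ≤ ‖S ^ n‖ * ‖x‖ ^ n * ‖x‖ := by
          calc ‖S x‖ ^ n * ‖x‖ ≤ ‖(S ^ n) x‖ * ‖x‖ ^ n := hpoint x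
            _ ≤ ‖S ^ n‖ * ‖x‖ * ‖x‖ ^ n :=
                mul_le_mul_of_nonneg_right h2 (pow_nonneg (norm_nonneg x) n)
            _ = ‖S ^ n‖ * ‖x‖ ^ n * ‖x‖ := by ring
        have h4 : ‖S x‖ ^ n ≤ ‖S ^ n‖ * ‖x‖ ^ n := le_of_mul_le_mul_right h3 hxpos
        calc ‖S x‖ ^ n ≤ ‖S ^ n‖ * ‖x‖ ^ n := h4
          _ = (c * ‖x‖) ^ n := by rw [mul_pow, hcpow]
      exact (pow_le_pow_iff_left₀ (norm_nonneg _)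
        (mul_nonneg hcnon (norm_nonneg x)) hn).mp h1
  calc ‖S‖ ^ n ≤ c ^ n := pow_le_pow_left₀ (norm_nonneg S) hSc n
    _ = ‖S ^ n‖ := hcpow

theorem stmt_1 {H : Type*} [NormedAddCommGroup H] [InnerProductSpace ℂ H]
    [CompleteSpace H] (T : H →L[ℂ] H) (μ : ℂ)
    (hT : ∀ (lam : ℂ) (x : H),
      ‖(T - lam • 1) x‖ ^ 2 ≤ ‖((T - lam • 1) ∘L (T - lam • 1)) x‖ * ‖x‖)
    (hσ : spectrum ℂ T = {μ}) :
    T = μ • 1 := by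
  set S : H →L[ℂ] H := T - μ • 1 with hS
  have hP : ∀ x : H, ‖S x‖ ^ 2 ≤ ‖S (S x)‖ * ‖x‖ := fun x => hT μ x
  -- spectrum of S is {0}
  have hspecS : spectrum ℂ S = {0} := by
    have halg : (algebraMap ℂ (H →L[ℂ] H)) μ = μ • 1 := Algebra.algebraMap_eq_smul_one μ
    have := spectrum.sub_singleton_eq T μ
    rw [hσ, halg] at this
    rw [hS, ← this, Set.singleton_sub_singleton, sub_self]
  -- spectral radius is 0
  have hrad : spectralRadius ℂ S = 0 := by
    rw [spectralRadius, hspecS]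
    simp
  -- Gelfand formula
  have htend := spectrum.pow_nnnorm_pow_one_div_tendsto_nhds_spectralRadius S
  rw [hrad] at htend
  have hle : ∀ᶠ n : ℕ in atTop, (‖S‖₊ : ℝ≥0∞) ≤ (‖S ^ n‖₊ : ℝ≥0∞) ^ (1 / (n : ℝ)) := by
    filter_upwards [eventually_ge_atTop 1] with n hn1
    have hn : n ≠ 0 := by omega
    have h1 : ‖S‖ ^ n ≤ ‖S ^ n‖ := normaloid_pow S hP n hn
    have h2 : (‖S‖₊ : ℝ≥0∞) ^ n ≤ (‖S ^ n‖₊ : ℝ≥0∞) := by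
      rw [← ENNReal.coe_pow]
      exact_mod_cast h1
    have h3 := ENNReal.rpow_le_rpow h2 (by positivity : (0:ℝ) ≤ 1 / n)
    calc (‖S‖₊ : ℝ≥0∞) = ((‖S‖₊ : ℝ≥0∞) ^ n) ^ (1 / (n : ℝ)) := by
          rw [← ENNReal.rpow_natCast, ← ENNReal.rpow_mul, mul_one_div,
            div_self (by exact_mod_cast hn : (n : ℝ) ≠ 0), ENNReal.rpow_one]
      _ ≤ (‖S ^ n‖₊ : ℝ≥0∞) ^ (1 / (n : ℝ)) := h3
  have hnorm0 : (‖S‖₊ : ℝ≥0∞) ≤ 0 := ge_of_tendsto htend hle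
  have : S = 0 := by
    have : ‖S‖₊ = 0 := by exact_mod_cast le_antisymm (by exact_mod_cast hnorm0) zero_le
    simpa using this
  rw [hS, sub_eq_zero] at this
  exact this
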